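/- Let n be a positive integer, α ∈ (1/2, 1), and Λ₁, …, Λₙ > 0. Let e : [0, ∞) → ℝⁿ be differentiable with e_i′(t) = −Λ_i |e_i(t)|^α sign(e_i(t)) for each i = 1, …, n and all t ≥ 0. Then each component satisfies e_i(t) = 0 for all t ≥ t_{f,i} := Λ_i⁻¹ (1−α)⁻¹ |e_i(0)|^{1−α}; consequently e(t) = 0 for all t ≥ max_{1 ≤ i ≤ n} t_{f,i}. -/

import Mathlib

open Finset

private lemma hasDerivAt_abs_comp {x : ℝ → ℝ} {d t : ℝ} (hx : HasDerivAt x d t)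
    (h : x t ≠ 0) : HasDerivAt (fun s => |x s|) (Real.sign (x t) * d) t := by
  rcases h.lt_or_gt with h | h
  · have hev : (fun s => |x s|) =ᶠ[nhds t] (fun s => -x s) := by
      filter_upwards [hx.continuousAt.preimage_mem_nhds (Iio_mem_nhds h)] with s hs
      exact abs_of_neg hs
    rw [Real.sign_of_neg h]
    simpa using hx.neg.congr_of_eventuallyEq hev
  · have hev : (fun s => |x s|) =ᶠ[nhds t] x := by
      filter_upwards [hx.continuousAt.preimage_mem_nhds (Ioi_mem_nhds h)] with s hs
      exact abs_of_pos hs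
    rw [Real.sign_of_pos h]
    simpa using hx.congr_of_eventuallyEq hev

private lemma scalar_finite_time (α lam : ℝ) (hα : α ∈ Set.Ioo (1 / 2 : ℝ) 1)
    (hlam : 0 < lam) (x : ℝ → ℝ)
    (hode : ∀ t : ℝ, 0 ≤ t → HasDerivAt x (-lam * |x t| ^ α * Real.sign (x t)) t) :
    ∀ t : ℝ, lam⁻¹ * (1 - α)⁻¹ * |x 0| ^ (1 - α) ≤ t → x t = 0 := by
  obtain ⟨hα2, hα1⟩ := hα
  have h1α : (0 : ℝ) < 1 - α := by linarith
  set T : ℝ := lam⁻¹ * (1 - α)⁻¹ * |x 0| ^ (1 - α) with hTdef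
  have hT0 : 0 ≤ T := by positivity
  -- |x| is antitone on [0, ∞)
  have hV : AntitoneOn (fun t => x t ^ 2) (Set.Ici 0) := by
    apply antitoneOn_of_deriv_nonpos (convex_Ici 0)
    · exact fun t ht => ((hode t ht).continuousAt.pow 2).continuousWithinAt
    · intro t ht
      rw [interior_Ici] at ht
      exact ((hode t ht.le).pow 2).differentiableAt.differentiableWithinAt
    · intro t ht
      rw [interior_Ici] at ht
      rw [show deriv (fun t => x t ^ 2) t = _ from ((hode t ht.le).pow 2).deriv]
      have ha : (0 : ℝ) ≤ |x t| ^ α := Real.rpow_nonneg (abs_nonneg _) _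
      have hla : 0 ≤ lam * |x t| ^ α := mul_nonneg hlam.le ha
      rcases lt_trichotomy (x t) 0 with h | h | h
      · rw [Real.sign_of_neg h]; norm_num; nlinarith
      · simp [h]
      · rw [Real.sign_of_pos h]; norm_num; nlinarith
  have habs : ∀ s t : ℝ, 0 ≤ s → s ≤ t → |x t| ≤ |x s| := by
    intro s t hs hst
    rw [← Real.sqrt_sq_eq_abs, ← Real.sqrt_sq_eq_abs]
    exact Real.sqrt_le_sqrt (hV hs (le_trans hs hst) hst)
  -- x T = 0
  have hxT : x T = 0 := by
    by_contra hne
    have hpos : ∀ t ∈ Set.Icc (0 : ℝ) T, x t ≠ 0 := by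
      intro t ht h0
      have := habs t T ht.1 ht.2
      rw [h0, abs_zero] at this
      exact hne (abs_eq_zero.mp (le_antisymm this (abs_nonneg _)))
    set H : ℝ → ℝ := fun t => |x t| ^ (1 - α) + ((1 - α) * lam) * t with hHdef
    have hder : ∀ t ∈ Set.Ico (0 : ℝ) T, HasDerivWithinAt H 0 (Set.Ici t) t := by
      intro t ht
      have htI : t ∈ Set.Icc (0 : ℝ) T := ⟨ht.1, ht.2.le⟩
      have hxt := hpos t htI
      have habs' := hasDerivAt_abs_comp (hode t ht.1) hxt
      have hr := habs'.rpow_const (p := 1 - α) (Or.inl (abs_ne_zero.mpr hxt))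
      have hlin : HasDerivAt (fun s => ((1 - α) * lam) * s) ((1 - α) * lam) t := by
        simpa using (hasDerivAt_id t).const_mul ((1 - α) * lam)
      have := hr.add hlin
      have habs_pos : 0 < |x t| := abs_pos.mpr hxt
      have hsq : Real.sign (x t) * Real.sign (x t) = 1 := by
        rcases hxt.lt_or_gt with h | h
        · rw [Real.sign_of_neg h]; norm_num
        · rw [Real.sign_of_pos h]; norm_num
      have hval : Real.sign (x t) * (-lam * |x t| ^ α * Real.sign (x t)) * (1 - α) *
          |x t| ^ (1 - α - 1) + (1 - α) * lam = 0 := by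
        have hmul : |x t| ^ α * |x t| ^ (1 - α - 1) = |x t| ^ (α + (1 - α - 1)) :=
          (Real.rpow_add habs_pos _ _).symm
        have hs2 : Real.sign (x t) * (-lam * |x t| ^ α * Real.sign (x t)) * (1 - α) *
            |x t| ^ (1 - α - 1)
            = -lam * (1 - α) * (|x t| ^ α * |x t| ^ (1 - α - 1)) *
              (Real.sign (x t) * Real.sign (x t)) := by ring
        rw [hs2, hsq, mul_one, hmul, show α + (1 - α - 1) = 0 by ring, Real.rpow_zero]
        ring
      rw [hval] at this
      exact this.hasDerivWithinAt
    have hcont : ContinuousOn H (Set.Icc 0 T) := by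
      apply ContinuousOn.add
      · apply ContinuousOn.rpow_const
        · exact fun t ht => (hode t ht.1).continuousAt.continuousWithinAt.abs
        · exact fun t _ => Or.inr h1α.le
      · exact (continuous_const.mul continuous_id).continuousOn
    have hHT := constant_of_has_deriv_right_zero hcont hder T ⟨hT0, le_refl T⟩
    have hcT : ((1 - α) * lam) * T = |x 0| ^ (1 - α) := by
      rw [hTdef]; field_simp
    simp only [hHdef] at hHT
    ring_nf at hHT hcT
    have hXT0 : |x T| ^ (1 - α) = 0 := by linarith
    have := Real.rpow_eq_zero_iff_of_nonneg (abs_nonneg (x T)) |>.mp hXT0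
    exact hne (abs_eq_zero.mp this.1)
  intro t ht
  have := habs T t hT0 ht
  rw [hxT, abs_zero] at this
  exact abs_eq_zero.mp (le_antisymm this (abs_nonneg _))

theorem terminal_sliding_componentwise_finite_time
    (n : ℕ) (hn : 0 < n)
    (α : ℝ) (hα : α ∈ Set.Ioo (1 / 2 : ℝ) 1)
    (Λ : Fin n → ℝ) (hΛ : ∀ i, 0 < Λ i)
    (e : ℝ → Fin n → ℝ)
    (hode : ∀ (i : Fin n) (t : ℝ), 0 ≤ t →
      HasDerivAt (fun s => e s i) (-Λ i * |e t i| ^ α * Real.sign (e t i)) t) :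
    (∀ (i : Fin n) (t : ℝ), (Λ i)⁻¹ * (1 - α)⁻¹ * |e 0 i| ^ (1 - α) ≤ t →
      e t i = 0) ∧
    (∀ t : ℝ,
      (Finset.univ.sup' (Finset.univ_nonempty_iff.mpr ⟨⟨0, hn⟩⟩)
        fun i : Fin n => (Λ i)⁻¹ * (1 - α)⁻¹ * |e 0 i| ^ (1 - α)) ≤ t →
      e t = 0) := by
  have key : ∀ (i : Fin n) (t : ℝ), (Λ i)⁻¹ * (1 - α)⁻¹ * |e 0 i| ^ (1 - α) ≤ t →
      e t i = 0 := fun i =>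
    scalar_finite_time α (Λ i) hα (hΛ i) (fun s => e s i) (hode i)
  refine ⟨key, fun t ht => funext fun i => key i t (le_trans ?_ ht)⟩
  exact Finset.le_sup' (fun i : Fin n => (Λ i)⁻¹ * (1 - α)⁻¹ * |e 0 i| ^ (1 - α))
    (Finset.mem_univ i)
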